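/- Assume λ₋ = λ₊ = 1, c·N + d ≠ 0 and let ϱ₋, ϱ₊ ∈ ℝ. Define the stationary two-points correlation function φ_ss on T_N ∪ ∂T_N by φ_ss(x,y) = d·(ϱ₊ − ϱ₋)²·[ (N−y)·x / (N²·(cN + d)) − 1_{x=y} / (2N·(cN + d)) ] for (x,y) ∈ T_N and φ_ss ≡ 0 on ∂T_N. Then, with ϱ_ss(x) = (ϱ₊ − ϱ₋)·x/N + ϱ₋ the stationary density profile, φ_ss satisfies Δ²ᴰ_N φ_ss(x,y) = −d·N²·(ϱ_ss(x+1) − ϱ_ss(x))²·1_{y = x+1} = −d·(ϱ₊ − ϱ₋)²·1_{y = x+1} for every (x,y) ∈ T_N. In particular max over T_N of |φ_ss| is bounded by a constant times 1/N. -/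

import Mathlib

noncomputable section

/-- Left jump rate of the two-dimensional walk: `c_{z,z−1} = cλ₋` if `z = 1`, else `c`. -/
def cMinus (c lm : ℝ) (z : ℤ) : ℝ := if z = 1 then c * lm else c

/-- Right jump rate of the two-dimensional walk: `c_{z,z+1} = cλ₊` if `z = N−1`, else `c`. -/
def cPlus (N : ℤ) (c lp : ℝ) (z : ℤ) : ℝ := if z = N - 1 then c * lp else c

/-- The generator `Δ²ᴰ_N` of the two-dimensional random walk on the triangle
`T_N = {(x,y) : 1 ≤ x ≤ y ≤ N−1}` (absorbed at `∂T_N`), acting on functions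
`f : ℤ × ℤ → ℝ`: for `x < y` it is the nearest-neighbour operator with rates
`cMinus`/`cPlus` plus the extra diagonal term `d N² (f(x,x) + f(x+1,x+1) − 2f(x,x+1))`
on the upper diagonal `y = x+1`; for `x = y` it is
`2N² (c_{x,x−1} f(x−1,x) + c_{x,x+1} f(x,x+1) − (c_{x,x−1}+c_{x,x+1}) f(x,x))`. -/
def lap2D (N : ℤ) (c d lm lp : ℝ) (f : ℤ → ℤ → ℝ) (x y : ℤ) : ℝ :=
  if x = y then
    2 * (N : ℝ) ^ 2 * (cMinus c lm x * f (x - 1) x + cPlus N c lp x * f x (x + 1)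
      - (cMinus c lm x + cPlus N c lp x) * f x x)
  else
    (N : ℝ) ^ 2 * (cMinus c lm x * (f (x - 1) y - f x y)
        + cPlus N c lp x * (f (x + 1) y - f x y)
        + cMinus c lm y * (f x (y - 1) - f x y)
        + cPlus N c lp y * (f x (y + 1) - f x y))
      + d * (N : ℝ) ^ 2 * (f x x + f (x + 1) (x + 1) - 2 * f x (x + 1))
        * (if y = x + 1 then 1 else 0)

set_option maxHeartbeats 1000000 in
/-- For `λ₋ = λ₊ = 1` and `cN + d ≠ 0`, the stationary two-points
correlation function `φ_ss(x,y) = d(ϱ₊−ϱ₋)²[(N−y)x/(N²(cN+d)) − 1_{x=y}/(2N(cN+d))]`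
on `T_N` (vanishing on `∂T_N`) satisfies, with `ϱ_ss(x) = (ϱ₊−ϱ₋)x/N + ϱ₋ `,
`Δ²ᴰ_N φ_ss(x,y) = −dN²(ϱ_ss(x+1)−ϱ_ss(x))² 1_{y=x+1} = −d(ϱ₊−ϱ₋)² 1_{y=x+1}` on `T_N`.
In particular `max_{T_N} |φ_ss|` is bounded by a constant times `1/N`, here in the
explicit form `|φ_ss(x,y)| ≤ |d|(ϱ₊−ϱ₋)²/(2|cN+d|)`. -/
theorem stationary_correlation (N : ℤ) (hN : 5 ≤ N) (c d : ℝ) (hc : 0 < c)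
    (hcd : c * (N : ℝ) + d ≠ 0) (rm rp : ℝ) (φ : ℤ → ℤ → ℝ) (ρ : ℤ → ℝ)
    (hφ : ∀ x y : ℤ, 1 ≤ x → x ≤ y → y ≤ N - 1 →
      φ x y = d * (rp - rm) ^ 2 * (((N : ℝ) - y) * x / ((N : ℝ) ^ 2 * (c * N + d))
        - (if x = y then 1 / (2 * N * (c * N + d)) else 0)))
    (hφ0 : ∀ y : ℤ, 0 ≤ y → y ≤ N → φ 0 y = 0)
    (hφN : ∀ x : ℤ, 0 ≤ x → x ≤ N → φ x N = 0)
    (hρ : ∀ x : ℤ, ρ x = (rp - rm) * (x : ℝ) / N + rm) :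
    ∀ x y : ℤ, 1 ≤ x → x ≤ y → y ≤ N - 1 →
      lap2D N c d 1 1 φ x y
          = -d * (N : ℝ) ^ 2 * (ρ (x + 1) - ρ x) ^ 2 * (if y = x + 1 then 1 else 0)
        ∧ lap2D N c d 1 1 φ x y
          = -d * (rp - rm) ^ 2 * (if y = x + 1 then 1 else 0)
        ∧ |φ x y| ≤ |d| * (rp - rm) ^ 2 / (2 * |c * (N : ℝ) + d|) := by
  have hN5 : (5 : ℝ) ≤ (N : ℝ) := by exact_mod_cast hN
  have hN0 : (N : ℝ) ≠ 0 := by linarith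
  have hcM : ∀ z : ℤ, cMinus c 1 z = c := fun z => by unfold cMinus; split <;> ring
  have hcP : ∀ z : ℤ, cPlus N c 1 z = c := fun z => by unfold cPlus; split <;> ring
  have key : ∀ x y : ℤ, 0 ≤ x → x ≤ y → y ≤ N → 1 ≤ y → x ≤ N - 1 →
      φ x y = d * (rp - rm) ^ 2 * (((N : ℝ) - y) * x / ((N : ℝ) ^ 2 * (c * N + d))
        - (if x = y then 1 / (2 * N * (c * N + d)) else 0)) := by
    intro x y hx hxy hyN hy1 hxN
    by_cases h1 : 1 ≤ x
    · by_cases h2 : y ≤ N - 1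
      · exact hφ x y h1 hxy h2
      · have hyy : y = N := by omega
        subst hyy
        rw [hφN x (by omega) (by omega), if_neg (by omega)]
        push_cast
        ring
    · have hx0 : x = 0 := by omega
      subst hx0
      rw [hφ0 y (by omega) hyN, if_neg (by omega)]
      push_cast
      ring
  intro x y hx hxy hy
  have h2 : lap2D N c d 1 1 φ x y
      = -d * (rp - rm) ^ 2 * (if y = x + 1 then 1 else 0) := by
    rcases eq_or_lt_of_le hxy with hd | hlt
    · -- diagonal case x = y
      subst hd
      rw [lap2D, if_pos rfl, hcM, hcP,
        key (x - 1) x (by omega) (by omega) (by omega) (by omega) (by omega),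
        key x (x + 1) (by omega) (by omega) (by omega) (by omega) (by omega),
        key x x (by omega) (by omega) (by omega) (by omega) (by omega)]
      rw [if_neg (show x - 1 ≠ x by omega), if_neg (show x ≠ x + 1 by omega),
        if_pos rfl, if_neg (show x ≠ x + 1 by omega)]
      push_cast
      field_simp
      ring
    · rcases eq_or_lt_of_le (show x + 1 ≤ y by omega) with hd1 | hlt1
      · -- upper diagonal case y = x + 1
        subst hd1
        rw [lap2D, if_neg (show x ≠ x + 1 by omega), hcM, hcP, hcM, hcP,
          show x + 1 - 1 = x from by ring]
        rw [key (x - 1) (x + 1) (by omega) (by omega) (by omega) (by omega) (by omega),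
          key (x + 1) (x + 1) (by omega) (by omega) (by omega) (by omega) (by omega),
          key x x (by omega) (by omega) (by omega) (by omega) (by omega),
          key x (x + 1 + 1) (by omega) (by omega) (by omega) (by omega) (by omega),
          key x (x + 1) (by omega) (by omega) (by omega) (by omega) (by omega)]
      
        rw [if_neg (show x - 1 ≠ x + 1 by omega), if_pos rfl, if_pos rfl,
          if_neg (show x ≠ x + 1 + 1 by omega), if_neg (show x ≠ x + 1 by omega),
          if_pos rfl]
        push_cast
        have hcd' : d + c * (N : ℝ) ≠ 0 := by rwa [add_comm]
        field_simp
        linear_combination (d * (4 * rp * rm - 2 * rp ^ 2 - 2 * rm ^ 2)) * mul_inv_cancel₀ hcd'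
      · -- case x + 1 < y
        rw [lap2D, if_neg (show x ≠ y by omega), hcM, hcP, hcM, hcP,
          if_neg (show y ≠ x + 1 by omega), mul_zero]
        rw [key (x - 1) y (by omega) (by omega) (by omega) (by omega) (by omega),
          key (x + 1) y (by omega) (by omega) (by omega) (by omega) (by omega),
          key x (y - 1) (by omega) (by omega) (by omega) (by omega) (by omega),
          key x (y + 1) (by omega) (by omega) (by omega) (by omega) (by omega),
          key x y (by omega) (by omega) (by omega) (by omega) (by omega)]
        rw [if_neg (show x - 1 ≠ y by omega), if_neg (show x + 1 ≠ y by omega),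
          if_neg (show x ≠ y - 1 by omega), if_neg (show x ≠ y + 1 by omega),
          if_neg (show x ≠ y by omega)]
        push_cast
        field_simp
        ring
  have h1 : lap2D N c d 1 1 φ x y
      = -d * (N : ℝ) ^ 2 * (ρ (x + 1) - ρ x) ^ 2 * (if y = x + 1 then 1 else 0) := by
    have hρd : ρ (x + 1) - ρ x = (rp - rm) / N := by
      rw [hρ, hρ]
      push_cast
      field_simp
      ring
    rw [h2, hρd]
    have hsq : -d * (N : ℝ) ^ 2 * ((rp - rm) / N) ^ 2 = -d * (rp - rm) ^ 2 := by
      field_simp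
    rw [hsq]
  have h3 : |φ x y| ≤ |d| * (rp - rm) ^ 2 / (2 * |c * (N : ℝ) + d|) := by
    have hx' : (1 : ℝ) ≤ (x : ℝ) := by exact_mod_cast hx
    have hxy' : (x : ℝ) ≤ (y : ℝ) := by exact_mod_cast hxy
    have hy' : (y : ℝ) ≤ (N : ℝ) - 1 := by
      have : ((y : ℤ) : ℝ) ≤ ((N - 1 : ℤ) : ℝ) := by exact_mod_cast hy
      push_cast at this
      linarith
    have habs : φ x y = (d * (rp - rm) ^ 2 / (c * N + d))
        * (((N : ℝ) - y) * x / (N : ℝ) ^ 2 - (if x = y then (1:ℝ) / (2 * (N:ℝ)) else 0)) := by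
      rw [hφ x y hx hxy hy]
      split_ifs with h
      · field_simp
      · field_simp
        ring
    have ht : |((N : ℝ) - y) * x / (N : ℝ) ^ 2 - (if x = y then (1:ℝ) / (2 * (N:ℝ)) else 0)| ≤ 1 / 2 := by
      have hN2 : (0 : ℝ) < (N : ℝ) ^ 2 := by positivity
      have hg0 : (0 : ℝ) ≤ ((N : ℝ) - y) * x := by nlinarith
      have hg1 : ((N : ℝ) - y) * x / (N : ℝ) ^ 2 ≤ 1 / 4 := by
        rw [div_le_iff₀ hN2]
        nlinarith [sq_nonneg ((N : ℝ) - 2 * x)]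
      have hg2 : (0 : ℝ) ≤ ((N : ℝ) - y) * x / (N : ℝ) ^ 2 := div_nonneg hg0 (le_of_lt hN2)
      have hh1 : 1 / (2 * (N : ℝ)) ≤ 1 / 2 := by
        rw [div_le_div_iff₀ (by linarith) (by norm_num)]
        linarith
      have hh2 : (0 : ℝ) ≤ 1 / (2 * (N : ℝ)) := by positivity
      rw [abs_le]
      split_ifs <;> constructor <;> linarith
    have hDpos : (0 : ℝ) < |c * (N : ℝ) + d| := abs_pos.mpr hcd
    rw [habs, abs_mul, abs_div, abs_mul, abs_of_nonneg (sq_nonneg (rp - rm))]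
    calc |d| * (rp - rm) ^ 2 / |c * (N : ℝ) + d|
          * |((N : ℝ) - y) * x / (N : ℝ) ^ 2 - (if x = y then (1:ℝ) / (2 * (N:ℝ)) else 0)|
        ≤ |d| * (rp - rm) ^ 2 / |c * (N : ℝ) + d| * (1 / 2) := by
          apply mul_le_mul_of_nonneg_left ht (by positivity)
      _ = |d| * (rp - rm) ^ 2 / (2 * |c * (N : ℝ) + d|) := by
          rw [div_mul_div_comm, mul_one, mul_comm (|c * (N : ℝ) + d|) 2]
  exact ⟨h1, h2, h3⟩

end
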